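/- Let G be a standard Gaussian random variable and let s, t ∈ ℝ. Then E[(√(1 + t²) G + t s)_−²] = (1 + t² + t² s²) · Q(ts/√(1 + t²)) − t s √(1 + t²) · ψ(ts/√(1 + t²)), where ψ(x) = (1/√(2π)) e^{−x²/2} is the standard normal density and Q(x) = ∫_x^∞ ψ(u) du is the standard normal tail function. Consequently, for the Gaussian-mixture model the threshold function satisfies g(κ) = min_{t∈ℝ} E[(G√(1+t²) + ts)_−²] = min_{t∈ℝ} { (1 + t² + t²s²) Q(ts/√(1+t²)) − ts√(1+t²) ψ(ts/√(1+t²)) }. -/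

import Mathlib

open MeasureTheory ProbabilityTheory Filter Set

open scoped NNReal ENNReal

/-- The negative part `(x)₋ = min x 0`. -/
noncomputable def negp (x : ℝ) : ℝ := min x 0

/-- The standard Gaussian measure on `ℝ`. -/
noncomputable def stdGaussian : Measure ℝ := gaussianReal 0 1

/-- The standard normal density `ψ`. -/
noncomputable def gaussPDF (x : ℝ) : ℝ := (Real.sqrt (2 * Real.pi))⁻¹ * Real.exp (-(x ^ 2) / 2)

/-- The standard normal tail function `Q(x) = ∫_x^∞ ψ(u) du`. -/
noncomputable def gaussTail (x : ℝ) : ℝ := ∫ u in Set.Ioi x, gaussPDF u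

lemma gaussPDF_eq : gaussPDF = fun x => (Real.sqrt (2 * Real.pi))⁻¹ *
    Real.exp (-(1/2) * x ^ 2) := by
  funext x
  rw [gaussPDF]
  congr 1
  ring

lemma integrable_gaussPDF : Integrable gaussPDF := by
  rw [gaussPDF_eq]
  exact (integrable_exp_neg_mul_sq (by norm_num : (0:ℝ) < 1/2)).const_mul _

lemma integrable_id_gaussPDF : Integrable (fun x : ℝ => x * gaussPDF x) := by
  have h := (integrable_mul_exp_neg_mul_sq (by norm_num : (0:ℝ) < 1/2)).const_mul
    ((Real.sqrt (2 * Real.pi))⁻¹)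
  refine h.congr ?_
  filter_upwards with x
  rw [gaussPDF_eq]
  ring

lemma integrable_sq_gaussPDF : Integrable (fun x : ℝ => x ^ 2 * gaussPDF x) := by
  have h := (integrable_rpow_mul_exp_neg_mul_sq (by norm_num : (0:ℝ) < 1/2)
    (by norm_num : (-1:ℝ) < 2)).const_mul ((Real.sqrt (2 * Real.pi))⁻¹)
  refine h.congr ?_
  filter_upwards with x
  rw [gaussPDF_eq, show ((2:ℝ)) = ((2:ℕ):ℝ) by norm_num, Real.rpow_natCast]
  ring

lemma integrable_sqm1_gaussPDF : Integrable (fun x : ℝ => (x ^ 2 - 1) * gaussPDF x) := by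
  refine (integrable_sq_gaussPDF.sub integrable_gaussPDF).congr ?_
  filter_upwards with x
  simp only [Pi.sub_apply]
  ring

lemma hasDerivAt_gaussPDF (x : ℝ) : HasDerivAt gaussPDF (-x * gaussPDF x) x := by
  have h : HasDerivAt (fun u : ℝ => -(u ^ 2) / 2) (-x) x := by
    have := ((hasDerivAt_pow 2 x).neg.div_const 2)
    exact this.congr_deriv (by push_cast; ring)
  have h2 := (h.exp).const_mul ((Real.sqrt (2 * Real.pi))⁻¹)
  have hg : gaussPDF = fun u : ℝ => (Real.sqrt (2 * Real.pi))⁻¹ *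
      Real.exp (-(u ^ 2) / 2) := rfl
  rw [hg]
  exact h2.congr_deriv (by simp only [hg]; ring)

lemma tendsto_gaussPDF_atTop : Tendsto gaussPDF atTop (nhds 0) := by
  rw [gaussPDF_eq, show (0:ℝ) = (Real.sqrt (2 * Real.pi))⁻¹ * 0 by ring]
  refine Tendsto.const_mul _ ?_
  refine Real.tendsto_exp_atBot.comp ?_
  exact Tendsto.const_mul_atTop_of_neg (by norm_num)
    (tendsto_pow_atTop (two_ne_zero))

lemma tendsto_mul_gaussPDF_atTop : Tendsto (fun x : ℝ => x * gaussPDF x) atTop (nhds 0) := by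
  have h := rpow_mul_exp_neg_mul_sq_isLittleO_exp_neg (by norm_num : (0:ℝ) < 1/2) 1
  have h2 : Tendsto (fun x : ℝ => x * Real.exp (-(1/2) * x ^ 2)) atTop (nhds 0) := by
    have hlim : Tendsto (fun x : ℝ => Real.exp (-(1/2) * x)) atTop (nhds 0) :=
      Real.tendsto_exp_atBot.comp
        (Tendsto.const_mul_atTop_of_neg (by norm_num) tendsto_id)
    have := h.tendsto_zero_of_tendsto hlim
    refine this.congr' ?_
    filter_upwards with x
    rw [Real.rpow_one]
  have h3 := h2.const_mul ((Real.sqrt (2 * Real.pi))⁻¹)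
  rw [mul_zero] at h3
  refine h3.congr ?_
  intro x
  rw [gaussPDF_eq]
  ring

lemma integral_Ioi_id_mul_gaussPDF (c : ℝ) :
    ∫ u in Set.Ioi c, u * gaussPDF u = gaussPDF c := by
  have h := integral_Ioi_of_hasDerivAt_of_tendsto' (a := c)
    (f := fun u => -gaussPDF u) (f' := fun u => u * gaussPDF u)
    (fun x _ => (hasDerivAt_gaussPDF x).neg.congr_deriv (by ring))
    integrable_id_gaussPDF.integrableOn
    (by simpa using tendsto_gaussPDF_atTop.neg)
  simpa using h

lemma integral_Ioi_sqm1_mul_gaussPDF (c : ℝ) :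
    ∫ u in Set.Ioi c, (u ^ 2 - 1) * gaussPDF u = c * gaussPDF c := by
  have hderiv : ∀ x : ℝ, HasDerivAt (fun u => -u * gaussPDF u)
      ((x ^ 2 - 1) * gaussPDF x) x := by
    intro x
    have := ((hasDerivAt_id x).neg.mul (hasDerivAt_gaussPDF x))
    exact this.congr_deriv (by simp only [Pi.neg_apply, id]; ring)
  have h := integral_Ioi_of_hasDerivAt_of_tendsto' (a := c)
    (f := fun u => -u * gaussPDF u) (f' := fun u => (u ^ 2 - 1) * gaussPDF u)
    (fun x _ => hderiv x) integrable_sqm1_gaussPDF.integrableOn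
    (by simpa using tendsto_mul_gaussPDF_atTop.neg)
  simpa using h

lemma gaussPDF_neg (x : ℝ) : gaussPDF (-x) = gaussPDF x := by
  rw [gaussPDF, gaussPDF, neg_pow]
  norm_num

lemma integral_stdGaussian (f : ℝ → ℝ) :
    ∫ x, f x ∂stdGaussian = ∫ x, gaussPDF x * f x := by
  rw [_root_.stdGaussian, gaussianReal_of_var_ne_zero _ one_ne_zero, gaussianPDF_def]
  rw [show (fun x => ENNReal.ofReal (gaussianPDFReal 0 1 x))
      = fun x => ((Real.toNNReal (gaussianPDFReal 0 1 x) : ℝ≥0) : ℝ≥0∞) from rfl]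
  rw [integral_withDensity_eq_integral_smul
    ((measurable_gaussianPDFReal 0 1).real_toNNReal) f]
  congr 1
  funext x
  rw [NNReal.smul_def, Real.coe_toNNReal _ (gaussianPDFReal_nonneg 0 1 x), smul_eq_mul]
  congr 1
  simp [gaussianPDFReal, gaussPDF]

lemma key_integral (a b : ℝ) (ha : 0 < a) :
    ∫ x, gaussPDF x * (negp (a * x + b)) ^ 2
      = (a ^ 2 + b ^ 2) * gaussTail (b / a) - a * b * gaussPDF (b / a) := by
  set c := b / a with hc
  have hac : a * c = b := by rw [hc]; field_simp
  have h1 : (fun x => gaussPDF x * (negp (a * x + b)) ^ 2)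
      = Set.indicator (Set.Iic (-c)) (fun x => gaussPDF x * (a * x + b) ^ 2) := by
    funext x
    by_cases hx : x ≤ -c
    · rw [Set.indicator_of_mem (show x ∈ Set.Iic (-c) from hx)]
      have hle : a * x + b ≤ 0 := by nlinarith [mul_le_mul_of_nonneg_left hx ha.le]
      rw [negp, min_eq_left hle]
    · rw [Set.indicator_of_notMem (show x ∉ Set.Iic (-c) from hx)]
      push_neg at hx
      have hgt : 0 ≤ a * x + b := by nlinarith [mul_le_mul_of_nonneg_left hx.le ha.le]
      rw [negp, min_eq_right hgt]
      ring
  rw [h1, integral_indicator measurableSet_Iic]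
  have h2 : (∫ x in Set.Iic (-c), gaussPDF x * (a * x + b) ^ 2)
      = ∫ u in Set.Ioi c, gaussPDF u * (b - a * u) ^ 2 := by
    have e1 : (∫ x in Set.Iic (-c), gaussPDF x * (a * x + b) ^ 2)
        = ∫ x in Set.Iic (-c), (fun u => gaussPDF u * (b - a * u) ^ 2) (-x) := by
      refine setIntegral_congr_fun measurableSet_Iic (fun x _ => ?_)
      simp only [gaussPDF_neg]
      ring
    rw [e1]
    have e2 := integral_comp_neg_Iic (-c) (fun u => gaussPDF u * (b - a * u) ^ 2)
    rw [neg_neg] at e2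
    exact e2
  rw [h2]
  have h3 : ∀ u : ℝ, gaussPDF u * (b - a * u) ^ 2
      = a ^ 2 * ((u ^ 2 - 1) * gaussPDF u) + (a ^ 2 + b ^ 2) * gaussPDF u
        - 2 * a * b * (u * gaussPDF u) := by
    intro u; ring
  rw [setIntegral_congr_fun measurableSet_Ioi (fun u _ => h3 u)]
  have i1 : IntegrableOn (fun u => a ^ 2 * ((u ^ 2 - 1) * gaussPDF u)) (Set.Ioi c) :=
    (integrable_sqm1_gaussPDF.const_mul _).integrableOn
  have i2 : IntegrableOn (fun u => (a ^ 2 + b ^ 2) * gaussPDF u) (Set.Ioi c) :=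
    (integrable_gaussPDF.const_mul _).integrableOn
  have i3 : IntegrableOn (fun u => 2 * a * b * (u * gaussPDF u)) (Set.Ioi c) :=
    (integrable_id_gaussPDF.const_mul _).integrableOn
  have i12 : IntegrableOn (fun u => a ^ 2 * ((u ^ 2 - 1) * gaussPDF u)
      + (a ^ 2 + b ^ 2) * gaussPDF u) (Set.Ioi c) := i1.add i2
  rw [integral_sub i12 i3, integral_add i1 i2,
    integral_const_mul, integral_const_mul, integral_const_mul,
    integral_Ioi_sqm1_mul_gaussPDF, integral_Ioi_id_mul_gaussPDF, ← gaussTail]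
  linear_combination a * gaussPDF c * hac

/-- the Gaussian identity
`E[(√(1+t²)G + ts)_−²] = (1+t²+t²s²)·Q(ts/√(1+t²)) − ts√(1+t²)·ψ(ts/√(1+t²))`,
and consequently the Gaussian-mixture threshold function satisfies
`g(κ) = min_t E[(G√(1+t²)+ts)_−²] = min_t {(1+t²+t²s²)Q(·) − ts√(1+t²)ψ(·)}`. -/
theorem gaussian_negpart_sq_identity :
    (∀ s t : ℝ,
      (∫ g, (negp (Real.sqrt (1 + t ^ 2) * g + t * s)) ^ 2 ∂stdGaussian)
        = (1 + t ^ 2 + t ^ 2 * s ^ 2) * gaussTail (t * s / Real.sqrt (1 + t ^ 2))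
            - t * s * Real.sqrt (1 + t ^ 2) * gaussPDF (t * s / Real.sqrt (1 + t ^ 2))) ∧
    (∀ s : ℝ,
      (⨅ t : ℝ, ∫ g, (negp (Real.sqrt (1 + t ^ 2) * g + t * s)) ^ 2 ∂stdGaussian)
        = ⨅ t : ℝ, ((1 + t ^ 2 + t ^ 2 * s ^ 2) * gaussTail (t * s / Real.sqrt (1 + t ^ 2))
            - t * s * Real.sqrt (1 + t ^ 2) * gaussPDF (t * s / Real.sqrt (1 + t ^ 2)))) := by
  have main : ∀ s t : ℝ,
      (∫ g, (negp (Real.sqrt (1 + t ^ 2) * g + t * s)) ^ 2 ∂stdGaussian)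
        = (1 + t ^ 2 + t ^ 2 * s ^ 2) * gaussTail (t * s / Real.sqrt (1 + t ^ 2))
            - t * s * Real.sqrt (1 + t ^ 2) * gaussPDF (t * s / Real.sqrt (1 + t ^ 2)) := by
    intro s t
    set a := Real.sqrt (1 + t ^ 2) with hadef
    have hpos : (0:ℝ) < 1 + t ^ 2 := by positivity
    have ha : 0 < a := Real.sqrt_pos.mpr hpos
    have ha2 : a ^ 2 = 1 + t ^ 2 := Real.sq_sqrt hpos.le
    rw [integral_stdGaussian, key_integral a (t * s) ha, ha2]
    ring_nf
  exact ⟨main, fun s => by simp only [main s]⟩
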